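/- arXiv:2403.13359 — 2 statements merged into one kernel-verified Lean document; each statement's English description precedes it below -/
import Mathlib

section
/- For every integer N ≡ 3 (mod 8) and every integer t ≥ 3, the number of triples (x₁, x₂, x₃) in (ℤ/2^t ℤ)³ with x₁² + x₂² + x₃² ≡ N (mod 2^t) is exactly 4^t. -/
namespace ThreeSqAux

/-- `2^s * 16 = 2^(s+4) = 0` in `ZMod (2^(s+4))`. -/
lemma hz (s : ℕ) : ((2:ZMod (2^(s+4)))^s * 16) = 0 := by
  have h := ZMod.natCast_self (2^(s+4))
  push_cast at h
  linear_combination h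

lemma ker_lemma (t : ℕ) (z : ZMod (2^(t+1)))
    (h : ZMod.castHom (pow_dvd_pow 2 (Nat.le_succ t)) (ZMod (2^t)) z = 0) :
    z = 0 ∨ z = ((2^t : ℕ) : ZMod (2^(t+1))) := by
  have hv : (z.val : ZMod (2^t)) = 0 := by
    rwa [ZMod.castHom_apply, ← ZMod.natCast_val] at h
  rw [ZMod.natCast_eq_zero_iff] at hv
  have hlt : z.val < 2^(t+1) := ZMod.val_lt z
  obtain ⟨k, hk⟩ := hv
  have hk2 : k < 2 := by
    by_contra hh
    push_neg at hh
    have : 2^t * 2 ≤ 2^t * k := Nat.mul_le_mul_left _ hh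
    rw [← pow_succ] at this
    omega
  interval_cases k
  · left; rw [← ZMod.natCast_rightInverse z, hk]; simp
  · right; rw [← ZMod.natCast_rightInverse z, hk]; norm_num

lemma two_pow_ne_zero (t : ℕ) : ((2^t : ℕ) : ZMod (2^(t+1))) ≠ 0 := by
  rw [Ne, ZMod.natCast_eq_zero_iff]
  intro h
  have h1 := Nat.le_of_dvd (by positivity) h
  have h2 : (2:ℕ)^t < 2^(t+1) := Nat.pow_lt_pow_right one_lt_two (Nat.lt_succ_self t)
  omega

lemma zmod8_odd : ∀ a b c : ZMod 8, a^2+b^2+c^2 = 3 → a.val % 2 = 1 := by decide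

lemma intCast_zmod8 (N : ℤ) (hN : N % 8 = 3) : (N : ZMod 8) = 3 := by
  have h : N = 8*(N/8) + 3 := by omega
  rw [h]; push_cast
  rw [show (8 : ZMod 8) = 0 by decide]; ring

lemma odd_of_sol (N : ℤ) (hN : N % 8 = 3) (t : ℕ) (ht : 3 ≤ t)
    (a b c : ZMod (2^t)) (h : a^2 + b^2 + c^2 = (N : ZMod (2^t))) :
    a.val % 2 = 1 := by
  have hdvd : (8:ℕ) ∣ 2^t := by
    have h8 : (8:ℕ) = 2^3 := by norm_num
    rw [h8]; exact pow_dvd_pow 2 ht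
  set ρ := ZMod.castHom hdvd (ZMod 8) with hρ
  have h8 : (ρ a)^2 + (ρ b)^2 + (ρ c)^2 = 3 := by
    have h2 := congrArg ρ h
    rw [map_add, map_add, map_pow, map_pow, map_pow, map_intCast,
      intCast_zmod8 N hN] at h2
    exact h2
  have hodd := zmod8_odd _ _ _ h8
  have hval : (ρ a).val = a.val % 8 := by
    rw [hρ, ZMod.castHom_apply, ← ZMod.natCast_val, ZMod.val_natCast]
  omega

abbrev Rg (s : ℕ) := ZMod (2^(s+4))
abbrev rg (s : ℕ) := ZMod (2^(s+3))

def pi (s : ℕ) : Rg s →+* rg s :=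
  ZMod.castHom (pow_dvd_pow 2 (Nat.le_succ (s+3))) (rg s)

def g (s : ℕ) (u : rg s × rg s × rg s) : Rg s :=
  (u.1.val : Rg s)^2 + (u.2.1.val : Rg s)^2 + (u.2.2.val : Rg s)^2

def pr (s : ℕ) (x : Rg s × Rg s × Rg s) : rg s × rg s × rg s :=
  (pi s x.1, pi s x.2.1, pi s x.2.2)

lemma pi_val (s : ℕ) (u : rg s) : pi s ((u.val : Rg s)) = u := by
  rw [pi, map_natCast, ZMod.natCast_val, ZMod.cast_id]

lemma sq_eq_of_cast_eq (s : ℕ) (y z : Rg s) (h : pi s y = pi s z) : y^2 = z^2 := by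
  have h0 : pi s (y - z) = 0 := by rw [map_sub, h, sub_self]
  rcases ker_lemma (s+3) (y-z) h0 with h1 | h1
  · have hyz : y = z := by linear_combination h1
    rw [hyz]
  · have hy : y = z + ((2^(s+3):ℕ) : Rg s) := by linear_combination h1
    rw [hy]
    push_cast
    linear_combination (z + (2:Rg s)^(s+2)) * hz s

lemma odd_shift (s : ℕ) (u : rg s) (hu : u.val % 2 = 1) :
    (((u + ((2^(s+2):ℕ) : rg s)).val : Rg s))^2
      = ((u.val : Rg s))^2 + ((2^(s+3):ℕ) : Rg s) := by
  set a : Rg s := (u.val : Rg s) with hadef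
  set b : Rg s := ((u + ((2^(s+2):ℕ) : rg s)).val : Rg s) with hbdef
  obtain ⟨k, hk⟩ : ∃ k, u.val = 2*k + 1 := ⟨u.val / 2, by omega⟩
  have ha : a = 2*(k:Rg s) + 1 := by rw [hadef, hk]; push_cast; ring
  have hπb : pi s (b - a - ((2^(s+2):ℕ) : Rg s)) = 0 := by
    have h1 : pi s b = u + ((2^(s+2):ℕ) : rg s) := pi_val s _
    have h2 : pi s a = u := pi_val s _
    rw [map_sub, map_sub, h1, h2, pi, map_natCast]
    ring
  rcases ker_lemma (s+3) _ hπb with h1 | h1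
  · have hb : b = a + ((2^(s+2):ℕ) : Rg s) := by linear_combination h1
    rw [hb, ha]
    push_cast
    linear_combination ((k:Rg s) + (2:Rg s)^s) * hz s
  · have hb : b = a + ((2^(s+2):ℕ) : Rg s) + ((2^(s+3):ℕ) : Rg s) := by linear_combination h1
    rw [hb, ha]
    push_cast
    linear_combination (3*(k:Rg s) + 1 + 9*(2:Rg s)^s) * hz s

lemma sumsq_eq (s : ℕ) (x : Rg s × Rg s × Rg s) :
    x.1^2 + x.2.1^2 + x.2.2^2 = g s (pr s x) := by
  have h : ∀ y : Rg s, y^2 = (((pi s y).val : Rg s))^2 := by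
    intro y
    exact sq_eq_of_cast_eq s y _ (by rw [pi_val])
  rw [g, pr, h x.1, h x.2.1, h x.2.2]

lemma g_proj (s : ℕ) (u : rg s × rg s × rg s) :
    pi s (g s u) = u.1^2 + u.2.1^2 + u.2.2^2 := by
  rw [g, map_add, map_add, map_pow, map_pow, map_pow, pi_val, pi_val, pi_val]

lemma fiber_card' (s : ℕ) (v : rg s) :
    (Finset.univ.filter fun a : Rg s => pi s a = v).card = 2 := by
  set c : Rg s := (v.val : Rg s) with hc
  have hπc : pi s c = v := pi_val s v
  have hset : (Finset.univ.filter fun a : Rg s => pi s a = v)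
      = {c, c + ((2^(s+3) : ℕ) : Rg s)} := by
    ext a
    simp only [Finset.mem_filter, Finset.mem_univ, true_and, Finset.mem_insert,
      Finset.mem_singleton]
    constructor
    · intro h
      have h0 : pi s (a - c) = 0 := by rw [map_sub, h, hπc, sub_self]
      rcases ker_lemma (s+3) _ h0 with h1 | h1
      · left; linear_combination h1
      · right; linear_combination h1
    · rintro (rfl | rfl)
      · exact hπc
      · rw [map_add, hπc, pi, map_natCast, ZMod.natCast_self, add_zero]
  rw [hset, Finset.card_insert_of_notMem, Finset.card_singleton]
  simp only [Finset.mem_singleton]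
  intro h
  exact two_pow_ne_zero (s+3) (by linear_combination -h)

lemma fiber3_card (s : ℕ) (u : rg s × rg s × rg s) :
    (Finset.univ.filter fun x : Rg s × Rg s × Rg s => pr s x = u).card = 8 := by
  have hset : (Finset.univ.filter fun x : Rg s × Rg s × Rg s => pr s x = u)
      = (Finset.univ.filter fun a : Rg s => pi s a = u.1) ×ˢ
        ((Finset.univ.filter fun a : Rg s => pi s a = u.2.1) ×ˢ
         (Finset.univ.filter fun a : Rg s => pi s a = u.2.2)) := by
    ext x
    simp only [Finset.mem_filter, Finset.mem_univ, true_and, Finset.mem_product, pr,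
      Prod.ext_iff]
  rw [hset, Finset.card_product, Finset.card_product, fiber_card', fiber_card', fiber_card']

lemma step (N : ℤ) (hN : N % 8 = 3) (s : ℕ) :
    Nat.card {x : Rg s × Rg s × Rg s //
        x.1^2 + x.2.1^2 + x.2.2^2 = (N : Rg s)}
      = 4 * Nat.card {x : rg s × rg s × rg s //
        x.1^2 + x.2.1^2 + x.2.2^2 = (N : rg s)} := by
  classical
  -- T : solutions downstairs whose canonical lift sums to N ;  B : ... to N + 2^(s+3)
  set T : Finset (rg s × rg s × rg s) :=
    Finset.univ.filter (fun u => g s u = (N : Rg s)) with hT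
  set B : Finset (rg s × rg s × rg s) :=
    Finset.univ.filter (fun u => g s u = (N : Rg s) + ((2^(s+3):ℕ) : Rg s)) with hB
  set S : Finset (rg s × rg s × rg s) :=
    Finset.univ.filter (fun u => u.1^2 + u.2.1^2 + u.2.2^2 = (N : rg s)) with hS
  -- members of T and of B are solutions downstairs
  have hTS : ∀ u, g s u = (N : Rg s) ∨ g s u = (N : Rg s) + ((2^(s+3):ℕ) : Rg s) →
      u.1^2 + u.2.1^2 + u.2.2^2 = (N : rg s) := by
    intro u h
    have hπN : pi s ((N : Rg s)) = (N : rg s) := map_intCast _ _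
    have hπ2 : pi s (((2^(s+3):ℕ) : Rg s)) = 0 := by
      rw [pi, map_natCast, ZMod.natCast_self]
    rcases h with h | h
    · rw [← g_proj, h, hπN]
    · rw [← g_proj, h, map_add, hπN, hπ2, add_zero]
  -- S = T ∪ B
  have hSTB : S = T ∪ B := by
    ext u
    simp only [hS, hT, hB, Finset.mem_filter, Finset.mem_univ, true_and, Finset.mem_union]
    constructor
    · intro h
      have h0 : pi s (g s u - (N : Rg s)) = 0 := by
        rw [map_sub, g_proj, h, map_intCast, sub_self]
      rcases ker_lemma (s+3) _ h0 with h1 | h1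
      · left; linear_combination h1
      · right; linear_combination h1
    · intro h; exact hTS u h
  have hdisj : Disjoint T B := by
    rw [Finset.disjoint_left]
    intro u hu hv
    simp only [hT, hB, Finset.mem_filter, Finset.mem_univ, true_and] at hu hv
    exact two_pow_ne_zero (s+3) (by linear_combination hu - hv)
  -- involution between T and B
  have hodd : ∀ u : rg s × rg s × rg s, u.1^2 + u.2.1^2 + u.2.2^2 = (N : rg s) →
      u.1.val % 2 = 1 :=
    fun u h => odd_of_sol N hN (s+3) (by omega) u.1 u.2.1 u.2.2 h
  have hgshift : ∀ u : rg s × rg s × rg s, u.1.val % 2 = 1 →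
      g s (u.1 + ((2^(s+2):ℕ) : rg s), u.2.1, u.2.2) = g s u + ((2^(s+3):ℕ) : Rg s) := by
    intro u hu
    simp only [g]
    rw [odd_shift s u.1 hu]
    ring
  have hcc : ((2^(s+2):ℕ) : rg s) + ((2^(s+2):ℕ) : rg s) = 0 := by
    have h := ZMod.natCast_self (2^(s+3))
    push_cast at h ⊢
    linear_combination h
  have h2 : ((2^(s+3):ℕ) : Rg s) + ((2^(s+3):ℕ) : Rg s) = 0 := by
    push_cast
    linear_combination hz s
  have hTB : T.card = B.card := by
    refine Finset.card_nbij' (fun u => (u.1 + ((2^(s+2):ℕ) : rg s), u.2.1, u.2.2))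
      (fun u => (u.1 + ((2^(s+2):ℕ) : rg s), u.2.1, u.2.2)) ?_ ?_ ?_ ?_
    · intro u hu
      simp only [hT, Finset.mem_coe, Finset.mem_filter, Finset.mem_univ, true_and] at hu
      have hsol := hTS u (Or.inl hu)
      simp only [hB, Finset.mem_coe, Finset.mem_filter, Finset.mem_univ, true_and]
      rw [hgshift u (hodd u hsol), hu]
    · intro u hu
      simp only [hB, Finset.mem_coe, Finset.mem_filter, Finset.mem_univ, true_and] at hu
      have hsol := hTS u (Or.inr hu)
      simp only [hT, Finset.mem_coe, Finset.mem_filter, Finset.mem_univ, true_and]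
      rw [hgshift u (hodd u hsol), hu]
      linear_combination h2
    · intro u _
      obtain ⟨u1, u2, u3⟩ := u
      show (u1 + ((2^(s+2):ℕ) : rg s) + ((2^(s+2):ℕ) : rg s), u2, u3) = (u1, u2, u3)
      rw [add_assoc, hcc, add_zero]
    · intro u _
      obtain ⟨u1, u2, u3⟩ := u
      show (u1 + ((2^(s+2):ℕ) : rg s) + ((2^(s+2):ℕ) : rg s), u2, u3) = (u1, u2, u3)
      rw [add_assoc, hcc, add_zero]
  -- counting upstairs
  have hcount : Nat.card {x : Rg s × Rg s × Rg s //
      x.1^2 + x.2.1^2 + x.2.2^2 = (N : Rg s)} = 8 * T.card := by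
    rw [Nat.card_eq_fintype_card, Fintype.card_subtype]
    have hfil : (Finset.univ.filter fun x : Rg s × Rg s × Rg s =>
        x.1^2 + x.2.1^2 + x.2.2^2 = (N : Rg s))
        = Finset.univ.filter fun x => g s (pr s x) = (N : Rg s) := by
      apply Finset.filter_congr
      intro x _
      rw [sumsq_eq]
    rw [hfil]
    rw [Finset.card_eq_sum_card_fiberwise (f := pr s) (t := T)
      (fun x hx => by
        simp only [Finset.mem_coe, Finset.mem_filter, Finset.mem_univ, true_and] at hx
        simp only [hT, Finset.mem_coe, Finset.mem_filter, Finset.mem_univ, true_and]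
        exact hx)]
    have hfib : ∀ u ∈ T, ((Finset.univ.filter fun x : Rg s × Rg s × Rg s =>
        g s (pr s x) = (N : Rg s)).filter fun x => pr s x = u).card = 8 := by
      intro u hu
      simp only [hT, Finset.mem_filter, Finset.mem_univ, true_and] at hu
      rw [Finset.filter_filter]
      have : (Finset.univ.filter fun x : Rg s × Rg s × Rg s =>
          (g s (pr s x) = (N : Rg s)) ∧ pr s x = u)
          = Finset.univ.filter fun x => pr s x = u := by
        apply Finset.filter_congr
        intro x _
        constructor
        · exact fun h => h.2
        · intro h; exact ⟨by rw [h, hu], h⟩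
      rw [this, fiber3_card]
    rw [Finset.sum_congr rfl hfib, Finset.sum_const, smul_eq_mul, mul_comm]
  -- counting downstairs
  have hScard : Nat.card {x : rg s × rg s × rg s //
      x.1^2 + x.2.1^2 + x.2.2^2 = (N : rg s)} = S.card := by
    rw [Nat.card_eq_fintype_card, Fintype.card_subtype, hS]
  rw [hcount, hScard, hSTB, Finset.card_union_of_disjoint hdisj, ← hTB]
  ring

end ThreeSqAux

theorem three_squares_count_mod_two_pow (N : ℤ) (hN : N % 8 = 3) (t : ℕ) (ht : 3 ≤ t) :
    Nat.card {x : ZMod (2 ^ t) × ZMod (2 ^ t) × ZMod (2 ^ t) //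
      x.1 ^ 2 + x.2.1 ^ 2 + x.2.2 ^ 2 = (N : ZMod (2 ^ t))} = 4 ^ t := by
  induction t, ht using Nat.le_induction with
  | base =>
    have h8 : (N : ZMod 8) = 3 := ThreeSqAux.intCast_zmod8 N hN
    show Nat.card {x : ZMod 8 × ZMod 8 × ZMod 8 //
      x.1 ^ 2 + x.2.1 ^ 2 + x.2.2 ^ 2 = (N : ZMod 8)} = 64
    rw [Nat.card_eq_fintype_card]
    rw [show ((N : ZMod 8)) = 3 from h8]
    decide
  | succ t ht ih =>
    obtain ⟨s, rfl⟩ : ∃ s, t = s + 3 := ⟨t - 3, by omega⟩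
    have hstep := ThreeSqAux.step N hN s
    rw [show s + 3 + 1 = s + 4 from rfl]
    rw [hstep, ih]
    ring
end

section
/- Let Q ∈ ℤ[x₁, ..., x_n] be homogeneous of degree d ≥ 1, not identically zero modulo any prime. Then for all primes p and integers e ≥ 1, p^{-en} · #{x ∈ (ℤ/p^eℤ)ⁿ : Q(x) ≡ 0 (mod p^e)} ≪ p^{-e/d}, with implied constant depending only on Q. -/
open Polynomial

private lemma helper_dvd (p : ℕ) (hp : p.Prime) :
    ∀ (v e : ℕ) (a b : ℤ), ¬ ((p:ℤ)^(v+1) ∣ a) → (p:ℤ)^e ∣ a * b → (p:ℤ)^(e - v) ∣ b := by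
  have hpz : Prime (p : ℤ) := Nat.prime_iff_prime_int.mp hp
  intro v
  induction v with
  | zero =>
    intro e a b ha hab
    simpa using hpz.pow_dvd_of_dvd_mul_left e (by simpa using ha) hab
  | succ v ih =>
    intro e a b ha hab
    by_cases hpa : (p:ℤ) ∣ a
    · obtain ⟨c, rfl⟩ := hpa
      have hc : ¬ ((p:ℤ)^(v+1) ∣ c) := fun h => ha (by
        have := mul_dvd_mul_left (p:ℤ) h
        rwa [← pow_succ'] at this)
      cases e with
      | zero => simpa using one_dvd _
      | succ e =>
        have h2 : (p:ℤ)^e ∣ c * b := by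
          have : (p:ℤ) * (p:ℤ)^e ∣ (p:ℤ) * (c * b) := by
            rw [← pow_succ']
            calc (p:ℤ)^(e+1) ∣ (p:ℤ)*c*b := hab
            _ = (p:ℤ) * (c*b) := by ring
          exact (mul_dvd_mul_iff_left (by exact_mod_cast hp.ne_zero : (p:ℤ) ≠ 0)).mp this
        have := ih e c b hc h2
        simpa [Nat.succ_sub_succ] using this
    · have : (p:ℤ)^e ∣ b := hpz.pow_dvd_of_dvd_mul_left e hpa hab
      exact dvd_trans (pow_dvd_pow _ (Nat.sub_le _ _)) this

private lemma coverT (p : ℕ) (hp : p.Prime) :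
    ∀ (d : ℕ) (f : Polynomial ℤ) (e v s : ℕ), f.natDegree ≤ d →
      ¬ ((p:ℤ)^(v+1) ∣ f.coeff d) → v + s*d + 1 ≤ e + d →
      ∃ T : Finset ℤ, T.card ≤ d ∧
        ∀ t : ℤ, (p:ℤ)^e ∣ f.eval t → ∃ t0 ∈ T, (p:ℤ)^s ∣ (t - t0) := by
  intro d
  induction d with
  | zero =>
    intro f e v s hdeg hc hyp
    refine ⟨∅, le_refl _, fun t ht => absurd ?_ hc⟩
    have hf : f = C (f.coeff 0) := (Polynomial.eq_C_of_natDegree_le_zero hdeg)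
    have h0 : (p:ℤ)^e ∣ f.coeff 0 := by rw [hf] at ht; simpa using ht
    exact dvd_trans (pow_dvd_pow ((p:ℤ)) (show v+1 ≤ e by omega)) h0
  | succ d ih =>
    intro f e v s hdeg hc hyp
    by_cases hroot : ∃ t : ℤ, (p:ℤ)^e ∣ f.eval t
    · obtain ⟨t0, ht0⟩ := hroot
      -- the shifted polynomial and its divX
      set g : Polynomial ℤ := (f.comp (X + C t0)).divX with hg
      have hfc : f.coeff (d+1) ≠ 0 := fun h => hc (h ▸ dvd_zero _)
      have hfd : f.natDegree = d + 1 :=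
        le_antisymm hdeg (Polynomial.le_natDegree_of_ne_zero hfc)
      have hcompdeg : (f.comp (X + C t0)).natDegree = d + 1 := by
        rw [Polynomial.natDegree_comp, Polynomial.natDegree_X_add_C, hfd, mul_one]
      have hgdeg : g.natDegree ≤ d := by
        refine Polynomial.natDegree_le_iff_coeff_eq_zero.mpr fun k hk => ?_
        rw [hg, Polynomial.coeff_divX]
        exact Polynomial.coeff_eq_zero_of_natDegree_lt (by omega)
      have hgcoeff : g.coeff d = f.coeff (d+1) := by
        rw [hg, Polynomial.coeff_divX]
        have h1 : (f.comp (X + C t0)).coeff (d+1) = (f.comp (X + C t0)).leadingCoeff := by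
          rw [Polynomial.leadingCoeff, hcompdeg]
        have h2 : f.coeff (d+1) = f.leadingCoeff := by rw [Polynomial.leadingCoeff, hfd]
        rw [h1, h2, Polynomial.leadingCoeff_comp (by
          rw [Polynomial.natDegree_X_add_C]; norm_num)]
        rw [Polynomial.leadingCoeff_X_add_C, one_pow, mul_one]
      have heval : ∀ u : ℤ, f.eval (t0 + u) = u * g.eval u + f.eval t0 := by
        intro u
        have h3 := Polynomial.X_mul_divX_add (f.comp (X + C t0))
        have h4 : (f.comp (X + C t0)).coeff 0 = f.eval t0 := by
          rw [Polynomial.coeff_zero_eq_eval_zero, Polynomial.eval_comp]; simp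
        calc f.eval (t0 + u) = (f.comp (X + C t0)).eval u := by
              rw [Polynomial.eval_comp]; simp [add_comm]
        _ = (X * g + C ((f.comp (X + C t0)).coeff 0)).eval u := by rw [hg, h3]
        _ = u * g.eval u + f.eval t0 := by
              rw [Polynomial.eval_add, Polynomial.eval_mul, Polynomial.eval_X,
                Polynomial.eval_C, h4]
      -- case on whether s = 0
      by_cases hs0 : s = 0
      · exact ⟨{t0}, by simp, fun t _ => ⟨t0, by simp, by simp [hs0]⟩⟩
      · have hs1 : 1 ≤ s := Nat.one_le_iff_ne_zero.mpr hs0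
        have hyp' : v + s*d + 1 ≤ (e - (s-1)) + d := by
          have h5 : s*(d+1) = s*d + s := by ring
          rw [h5] at hyp
          generalize s*d = x at hyp ⊢
          omega
        obtain ⟨T', hT'card, hT'⟩ := ih g (e - (s-1)) v s hgdeg (hgcoeff ▸ hc) hyp'
        refine ⟨insert t0 (T'.image (· + t0)), ?_, ?_⟩
        · calc (insert t0 (T'.image (· + t0))).card ≤ (T'.image (· + t0)).card + 1 :=
              Finset.card_insert_le _ _
          _ ≤ T'.card + 1 := Nat.add_le_add_right Finset.card_image_le 1
          _ ≤ d + 1 := by omega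
        · intro t ht
          set u := t - t0 with hu
          by_cases hdu : (p:ℤ)^s ∣ u
          · exact ⟨t0, Finset.mem_insert_self _ _, hdu⟩
          · have h6 : (p:ℤ)^e ∣ u * g.eval u := by
              have h7 : u * g.eval u = f.eval t - f.eval t0 := by
                have := heval u
                rw [hu] at this ⊢
                rw [show t0 + (t - t0) = t by ring] at this
                omega
              rw [h7]; exact dvd_sub ht ht0
            have h8 : ¬ ((p:ℤ)^((s-1)+1) ∣ u) := by
              rwa [show s - 1 + 1 = s by omega]
            have h9 : (p:ℤ)^(e - (s-1)) ∣ g.eval u := helper_dvd p hp (s-1) e u (g.eval u) h8 h6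
            obtain ⟨t0', ht0'mem, ht0'⟩ := hT' u h9
            refine ⟨t0' + t0, Finset.mem_insert_of_mem (Finset.mem_image_of_mem _ ht0'mem), ?_⟩
            have : t - (t0' + t0) = u - t0' := by rw [hu]; ring
            rwa [this]
    · exact ⟨∅, by simp, fun t ht => absurd ⟨t, ht⟩ hroot⟩

private lemma coeff_prod_top {ι : Type*} (s : Finset ι) (f : ι → Polynomial ℤ) (k : ι → ℕ)
    (h : ∀ i ∈ s, (f i).natDegree ≤ k i) :
    (∏ i ∈ s, f i).coeff (∑ i ∈ s, k i) = ∏ i ∈ s, (f i).coeff (k i) := by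
  classical
  induction s using Finset.induction with
  | empty => simp
  | insert a s hnotmem ih =>
    rw [Finset.prod_insert hnotmem, Finset.sum_insert hnotmem, Finset.prod_insert hnotmem]
    have hdeg : (∏ i ∈ s, f i).natDegree ≤ ∑ i ∈ s, k i :=
      (Polynomial.natDegree_prod_le _ _).trans
        (Finset.sum_le_sum (fun i hi => h i (Finset.mem_insert_of_mem hi)))
    rw [Polynomial.coeff_mul_add_eq_of_natDegree_le (h a (Finset.mem_insert_self a s)) hdeg,
      ih (fun i hi => h i (Finset.mem_insert_of_mem hi))]

private lemma lin_natDegree (a bb : ℤ) : (C a + C bb * X).natDegree ≤ 1 :=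
  (Polynomial.natDegree_add_le _ _).trans (by
    simp only [Polynomial.natDegree_C, Nat.max_le]
    exact ⟨Nat.zero_le _, (Polynomial.natDegree_C_mul_le _ _).trans (by simp)⟩)

private lemma lin_pow_natDegree (a bb : ℤ) (k : ℕ) : ((C a + C bb * X)^k).natDegree ≤ k :=
  Polynomial.natDegree_pow_le.trans (by
    have := lin_natDegree a bb; nlinarith)

private lemma coeff_lin_pow_top (a bb : ℤ) (k : ℕ) : ((C a + C bb * X)^k).coeff k = bb^k := by
  have h1 : ((C a + C bb * X)^k) = ∏ _i ∈ Finset.range k, (C a + C bb * X) := by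
    rw [Finset.prod_const, Finset.card_range]
  have h2 : k = ∑ _i ∈ Finset.range k, 1 := by simp
  rw [h1]
  calc (∏ _i ∈ Finset.range k, (C a + C bb * X)).coeff k
      = (∏ _i ∈ Finset.range k, (C a + C bb * X)).coeff (∑ _i ∈ Finset.range k, 1) := by
        rw [← h2]
  _ = ∏ _i ∈ Finset.range k, (C a + C bb * X).coeff 1 :=
        coeff_prod_top _ _ _ (fun i _ => lin_natDegree a bb)
  _ = bb ^ k := by
        have hc : (C a + C bb * X).coeff 1 = bb := by
          rw [Polynomial.coeff_add, Polynomial.coeff_C, Polynomial.coeff_C_mul,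
            Polynomial.coeff_X_one]
          simp
        rw [Finset.prod_const, Finset.card_range, hc]

private lemma count_cover (p e s : ℕ) (hp : p.Prime) (hse : s ≤ e)
    (cond : ZMod (p^e) → Prop) (T : Finset ℤ)
    (hcond : ∀ t : ZMod (p^e), cond t → ∃ t0 ∈ T, (p:ℤ)^s ∣ ((t.val : ℤ) - t0)) :
    Nat.card {t : ZMod (p^e) // cond t} ≤ T.card * p^(e-s) := by
  classical
  haveI : NeZero (p^e) := ⟨pow_ne_zero e hp.pos.ne'⟩
  rw [Nat.card_eq_fintype_card, Fintype.card_subtype]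
  set S := T.biUnion (fun t0 => (Finset.range (p^e)).filter (fun m : ℕ => (p:ℤ)^s ∣ ((m:ℤ) - t0)))
    with hS
  have h1 : (Finset.univ.filter cond).card ≤ S.card := by
    refine Finset.card_le_card_of_injOn (fun t => t.val) ?_ ?_
    · intro t ht
      obtain ⟨t0, ht0T, ht0⟩ := hcond t (Finset.mem_filter.mp ht).2
      exact Finset.mem_biUnion.mpr ⟨t0, ht0T,
        Finset.mem_filter.mpr ⟨Finset.mem_range.mpr (ZMod.val_lt t), ht0⟩⟩
    · intro t1 _ t2 _ h
      exact ZMod.val_injective _ h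
  have h2 : S.card ≤ T.card * p^(e-s) := by
    refine (Finset.card_biUnion_le).trans ?_
    have h3 : ∀ t0 ∈ T,
        ((Finset.range (p^e)).filter (fun m : ℕ => (p:ℤ)^s ∣ ((m:ℤ) - t0))).card ≤ p^(e-s) := by
      intro t0 _
      have hcard := Finset.card_le_card_of_injOn
        (s := (Finset.range (p^e)).filter (fun m : ℕ => (p:ℤ)^s ∣ ((m:ℤ) - t0)))
        (t := Finset.range (p^(e-s))) (fun m : ℕ => m / p^s) ?_ ?_
      · simpa using hcard
      · intro m hm
        have hmlt : m < p^e := Finset.mem_range.mp (Finset.mem_filter.mp hm).1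
        refine Finset.mem_range.mpr ?_
        rw [Nat.div_lt_iff_lt_mul (pow_pos hp.pos s), ← pow_add]
        rwa [Nat.sub_add_cancel hse]
      · intro m1 hm1 m2 hm2 hdiv
        have d1 := (Finset.mem_filter.mp hm1).2
        have d2 := (Finset.mem_filter.mp hm2).2
        have hd : (p:ℤ)^s ∣ ((m1:ℤ) - m2) := by
          have := dvd_sub d1 d2
          simpa using this
        have hmod : m1 % p^s = m2 % p^s := by
          have h4 : ((m2 : ℤ)) % ((p:ℤ)^s) = ((m1:ℤ)) % ((p:ℤ)^s) :=
            Int.modEq_iff_dvd.mpr hd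
          have h5 : (((m1 % p^s : ℕ)) : ℤ) = ((m2 % p^s : ℕ) : ℤ) := by
            push_cast
            omega
          exact_mod_cast h5
        have hdiv' : m1 / p^s = m2 / p^s := hdiv
        calc m1 = p^s * (m1 / p^s) + m1 % p^s := (Nat.div_add_mod _ _).symm
        _ = p^s * (m2 / p^s) + m2 % p^s := by rw [hdiv', hmod]
        _ = m2 := Nat.div_add_mod _ _
    calc ∑ t0 ∈ T, ((Finset.range (p^e)).filter (fun m : ℕ => (p:ℤ)^s ∣ ((m:ℤ) - t0))).card
        ≤ ∑ _t0 ∈ T, p^(e-s) := Finset.sum_le_sum h3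
    _ = T.card * p^(e-s) := by simp [Finset.sum_const, mul_comm]
  exact h1.trans h2

private lemma per_a (n d : ℕ) (Q : MvPolynomial (Fin n) ℤ) (hhom : Q.IsHomogeneous d)
    (b : Fin n → ℤ) (p e v s : ℕ) (hp : p.Prime) (hse : s ≤ e)
    (hnd : ¬ ((p:ℤ)^(v+1) ∣ MvPolynomial.eval b Q)) (hyp : v + s*d + 1 ≤ e + d)
    (a : Fin n → ZMod (p^e)) :
    Nat.card {t : ZMod (p^e) //
      MvPolynomial.eval (a + t • fun i => ((b i : ℤ) : ZMod (p^e)))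
        (MvPolynomial.map (Int.castRingHom (ZMod (p^e))) Q) = 0} ≤ d * p^(e-s) := by
  classical
  haveI : NeZero (p^e) := ⟨pow_ne_zero e hp.pos.ne'⟩
  set b' : Fin n → ZMod (p^e) := fun i => ((b i : ℤ) : ZMod (p^e)) with hb'
  set a' : Fin n → ℤ := fun i => ((a i).val : ℤ) with ha'
  set g : Fin n → Polynomial ℤ := fun i => C (a' i) + C (b i) * X with hgdef
  set F : Polynomial ℤ := MvPolynomial.eval₂ Polynomial.C g Q with hF
  have hsupp : ∀ m ∈ Q.support, (∑ i, m i) = d := by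
    intro m hm
    have h1 := hhom (MvPolynomial.mem_support_iff.mp hm)
    have h2 : (Finsupp.degree m) = d := by
      rw [Finsupp.degree_eq_weight_one]; exact_mod_cast h1
    rw [← h2, Finsupp.degree]
    exact (Finset.sum_subset (Finset.subset_univ _)
      (fun i _ h => Finsupp.notMem_support_iff.mp h)).symm
  have hdegF : F.natDegree ≤ d := by
    rw [hF, MvPolynomial.eval₂_eq']
    refine Polynomial.natDegree_sum_le_of_forall_le _ _ fun m hm => ?_
    refine (Polynomial.natDegree_mul_le).trans ?_
    have h3 : (∏ i, (g i)^(m i)).natDegree ≤ d := by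
      refine (Polynomial.natDegree_prod_le _ _).trans ?_
      calc ∑ i, ((g i)^(m i)).natDegree ≤ ∑ i, m i :=
            Finset.sum_le_sum (fun i _ => lin_pow_natDegree (a' i) (b i) (m i))
      _ = d := hsupp m hm
    simpa using h3
  have hcoeffF : F.coeff d = MvPolynomial.eval b Q := by
    rw [hF, MvPolynomial.eval₂_eq', Polynomial.finset_sum_coeff, MvPolynomial.eval_eq']
    refine Finset.sum_congr rfl fun m hm => ?_
    rw [Polynomial.coeff_C_mul]
    congr 1
    have hd' : d = ∑ i, m i := (hsupp m hm).symm
    rw [hd', coeff_prod_top Finset.univ _ (fun i => m i)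
      (fun i _ => lin_pow_natDegree (a' i) (b i) (m i))]
    exact Finset.prod_congr rfl fun i _ => coeff_lin_pow_top (a' i) (b i) (m i)
  obtain ⟨T, hTcard, hT⟩ := coverT p hp d F e v s hdegF (by rwa [hcoeffF]) hyp
  have hbridge : ∀ t : ZMod (p^e),
      MvPolynomial.eval (a + t • b') (MvPolynomial.map (Int.castRingHom (ZMod (p^e))) Q) = 0 →
      (p:ℤ)^e ∣ F.eval ((t.val : ℤ)) := by
    intro t ht
    set ψ : Polynomial ℤ →+* ZMod (p^e) := Polynomial.eval₂RingHom (Int.castRingHom (ZMod (p^e))) t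
      with hψ
    have hcast : ∀ z : ZMod (p^e), (((z.val : ℤ) : ZMod (p^e))) = z := by
      intro z
      rw [Int.cast_natCast, ZMod.natCast_val, ZMod.cast_id]
    have key : ((F.eval ((t.val : ℤ)) : ℤ) : ZMod (p^e))
        = MvPolynomial.eval (a + t • b') (MvPolynomial.map (Int.castRingHom (ZMod (p^e))) Q) := by
      have l1 : ((F.eval ((t.val : ℤ)) : ℤ) : ZMod (p^e)) = ψ F := by
        rw [hψ, Polynomial.coe_eval₂RingHom]
        have := Polynomial.eval₂_at_apply (Int.castRingHom (ZMod (p^e))) ((t.val : ℤ)) (p := F)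
        rw [show ((Int.castRingHom (ZMod (p^e))) ((t.val : ℤ))) = t from hcast t] at this
        rw [this]
        rfl
      have l2 : ψ F = MvPolynomial.eval₂ (ψ.comp Polynomial.C) (fun i => ψ (g i)) Q := by
        rw [hF]
        exact MvPolynomial.eval₂_comp_left ψ Polynomial.C g Q
      have l3 : ψ.comp Polynomial.C = Int.castRingHom (ZMod (p^e)) := by
        refine RingHom.ext fun r => ?_
        simp [hψ]
      have l4 : (fun i => ψ (g i)) = (a + t • b') := by
        funext i
        simp only [hψ, hgdef, Polynomial.coe_eval₂RingHom, Polynomial.eval₂_add,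
          Polynomial.eval₂_mul, Polynomial.eval₂_C, Polynomial.eval₂_X,
          Pi.add_apply, Pi.smul_apply, smul_eq_mul]
        show (((a i).val : ℤ) : ZMod (p^e)) + ((b i : ℤ) : ZMod (p^e)) * t = a i + t * b' i
        rw [hcast (a i)]
        simp only [hb']
        ring
      rw [l1, l2, l3, l4, ← MvPolynomial.eval_map]
    have h0 : ((F.eval ((t.val : ℤ)) : ℤ) : ZMod (p^e)) = 0 := by rw [key]; exact ht
    have h5 := (ZMod.intCast_zmod_eq_zero_iff_dvd _ (p^e)).mp h0
    have h6 : (((p:ℕ)^e : ℕ) : ℤ) = (p:ℤ)^e := by push_cast; ring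
    rwa [h6] at h5
  calc Nat.card {t : ZMod (p^e) // MvPolynomial.eval (a + t • b')
        (MvPolynomial.map (Int.castRingHom (ZMod (p^e))) Q) = 0}
      ≤ T.card * p^(e-s) := by
        refine count_cover p e s hp hse _ T fun t ht => ?_
        exact hT _ (hbridge t ht)
  _ ≤ d * p^(e-s) := Nat.mul_le_mul_right _ hTcard

theorem igusa_type_density_bound (n d : ℕ) (hd : 1 ≤ d) (Q : MvPolynomial (Fin n) ℤ)
    (hhom : Q.IsHomogeneous d)
    (hnz : ∀ p : ℕ, p.Prime → MvPolynomial.map (Int.castRingHom (ZMod p)) Q ≠ 0) :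
    ∃ C : ℝ, ∀ p e : ℕ, p.Prime → 1 ≤ e →
      (Nat.card {x : Fin n → ZMod (p ^ e) //
          MvPolynomial.eval x (MvPolynomial.map (Int.castRingHom (ZMod (p ^ e))) Q) = 0} : ℝ)
          / (p : ℝ) ^ (e * n)
        ≤ C * (p : ℝ) ^ (-(e : ℝ) / d) := by
  classical
  have hQ0 : Q ≠ 0 := by
    intro h
    exact hnz 2 Nat.prime_two (by rw [h]; simp)
  obtain ⟨b, hb⟩ : ∃ b : Fin n → ℤ, MvPolynomial.eval b Q ≠ 0 := by
    by_contra h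
    push_neg at h
    exact hQ0 (MvPolynomial.funext fun x => by rw [h x]; simp)
  set N : ℤ := MvPolynomial.eval b Q with hN
  refine ⟨(d : ℝ) * (N.natAbs : ℝ), ?_⟩
  intro p e hp he
  haveI : NeZero (p^e) := ⟨pow_ne_zero e hp.pos.ne'⟩
  set v := (N.natAbs).factorization p with hv
  have hNa : N.natAbs ≠ 0 := Int.natAbs_ne_zero.mpr hb
  have hpvN : p ^ v ∣ N.natAbs := Nat.ordProj_dvd _ _
  have hpv_le : (p:ℝ)^(v:ℕ) ≤ (N.natAbs : ℝ) := by
    exact_mod_cast Nat.le_of_dvd (Nat.pos_of_ne_zero hNa) hpvN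
  have hnd : ¬ ((p:ℤ)^(v+1) ∣ N) := by
    intro hcon
    have h1 : p^(v+1) ∣ N.natAbs := by
      have := Int.natAbs_dvd_natAbs.mpr hcon
      simpa [Int.natAbs_pow] using this
    exact (Nat.pow_succ_factorization_not_dvd hNa hp) h1
  have hp1R : (1:ℝ) < p := by exact_mod_cast hp.one_lt
  have hp0R : (0:ℝ) < p := lt_trans one_pos hp1R
  have hd0R : (0:ℝ) < d := by exact_mod_cast hd
  -- cardinality of the total space
  have hcard_tot : Nat.card (Fin n → ZMod (p^e)) = p^(e*n) := by
    rw [Nat.card_fun, Nat.card_zmod, Nat.card_eq_fintype_card, Fintype.card_fin, ← pow_mul]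
  by_cases hev : e ≤ v
  · -- trivial case: density ≤ 1 ≤ C p^{-e/d}
    have hK : (Nat.card {x : Fin n → ZMod (p ^ e) //
        MvPolynomial.eval x (MvPolynomial.map (Int.castRingHom (ZMod (p ^ e))) Q) = 0} : ℝ)
        ≤ (p:ℝ)^(e*n) := by
      have := Finite.card_subtype_le (fun x : Fin n → ZMod (p^e) =>
        MvPolynomial.eval x (MvPolynomial.map (Int.castRingHom (ZMod (p ^ e))) Q) = 0)
      rw [hcard_tot] at this
      exact_mod_cast this
    have hLHS : (Nat.card {x : Fin n → ZMod (p ^ e) //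
        MvPolynomial.eval x (MvPolynomial.map (Int.castRingHom (ZMod (p ^ e))) Q) = 0} : ℝ)
        / (p:ℝ)^(e*n) ≤ 1 := by
      rw [div_le_one (by positivity)]
      exact hK
    refine hLHS.trans ?_
    have h2 : (1:ℝ) ≤ (p:ℝ)^((v:ℝ) + (-(e:ℝ)/d)) := by
      rw [show (1:ℝ) = (p:ℝ)^(0:ℝ) by rw [Real.rpow_zero]]
      apply Real.rpow_le_rpow_of_exponent_le hp1R.le
      have h3 : (e:ℝ)/d ≤ (e:ℝ) := by
        apply div_le_self (by positivity) (by exact_mod_cast hd)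
      have h4 : (e:ℝ) ≤ (v:ℝ) := by exact_mod_cast hev
      rw [neg_div]
      linarith
    calc (1:ℝ) ≤ (p:ℝ)^((v:ℝ) + (-(e:ℝ)/d)) := h2
    _ = (p:ℝ)^(v:ℝ) * (p:ℝ)^(-(e:ℝ)/d) := Real.rpow_add hp0R _ _
    _ ≤ ((d:ℝ) * (N.natAbs:ℝ)) * (p:ℝ)^(-(e:ℝ)/d) := by
        apply mul_le_mul_of_nonneg_right ?_ (Real.rpow_nonneg hp0R.le _)
        calc (p:ℝ)^(v:ℝ) = (p:ℝ)^(v:ℕ) := by rw [Real.rpow_natCast]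
        _ ≤ (N.natAbs : ℝ) := hpv_le
        _ ≤ (d:ℝ) * (N.natAbs:ℝ) := by
            have hd1 : (1:ℝ) ≤ (d:ℝ) := by exact_mod_cast hd
            have hN0 : (0:ℝ) ≤ (N.natAbs:ℝ) := by positivity
            nlinarith
  · -- main case
    push_neg at hev
    set s := (e - v + (d-1))/d with hs
    have hA : d * s + (e - v + (d-1)) % d = e - v + (d-1) := by
      rw [hs]; exact Nat.div_add_mod _ _
    have hAmod : (e - v + (d-1)) % d < d := Nat.mod_lt _ (by omega)
    have hds_le : d * s ≤ e - v + (d-1) := by omega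
    have hds_ge : e - v ≤ d * s := by omega
    have hmul : s * d = d * s := Nat.mul_comm _ _
    have hse : s ≤ e := by
      by_contra hcon
      push_neg at hcon
      have h1 : d * (e+1) ≤ d * s := Nat.mul_le_mul_left d (by omega)
      have h2 : e ≤ d * e := Nat.le_mul_of_pos_left e (by omega)
      have h3 : d * (e+1) = d * e + d := by ring
      omega
    have hhyp : v + s*d + 1 ≤ e + d := by
      rw [hmul]; omega
    have he_le : e ≤ d*s + d*v := by
      have h2 : v ≤ d * v := Nat.le_mul_of_pos_left v (by omega)
      omega
    -- nat counting inequality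
    set b' : Fin n → ZMod (p^e) := fun i => ((b i : ℤ) : ZMod (p^e)) with hb'
    set P : (Fin n → ZMod (p^e)) → Prop := fun x =>
      MvPolynomial.eval x (MvPolynomial.map (Int.castRingHom (ZMod (p ^ e))) Q) = 0 with hP
    have hcount : Nat.card {x : Fin n → ZMod (p^e) // P x} * p^e ≤ p^(e*n) * (d * p^(e-s)) := by
      have hsub : ∀ (x y : Fin n → ZMod (p^e)), x - y + y = x := fun x y => by ring
      have E1 : {y : ((Fin n → ZMod (p^e)) × ZMod (p^e)) // P (y.1 + y.2 • b')}
          ≃ {x : Fin n → ZMod (p^e) // P x} × ZMod (p^e) :=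
        { toFun := fun y => (⟨y.val.1 + y.val.2 • b', y.property⟩, y.val.2)
          invFun := fun z => ⟨(z.1.val - z.2 • b', z.2), by
            rw [hsub]; exact z.1.property⟩
          left_inv := fun y => by
            ext <;> simp
          right_inv := fun z => by
            ext <;> simp }
      have h1 : Nat.card {y : ((Fin n → ZMod (p^e)) × ZMod (p^e)) // P (y.1 + y.2 • b')}
          = Nat.card {x : Fin n → ZMod (p^e) // P x} * p^e := by
        rw [Nat.card_congr E1, Nat.card_prod, Nat.card_zmod]
      have E2 := Equiv.subtypeProdEquivSigmaSubtype
        (fun (a : Fin n → ZMod (p^e)) (t : ZMod (p^e)) => P (a + t • b'))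
      have h2 : Nat.card {y : ((Fin n → ZMod (p^e)) × ZMod (p^e)) // P (y.1 + y.2 • b')}
          = ∑ a : Fin n → ZMod (p^e), Nat.card {t : ZMod (p^e) // P (a + t • b')} := by
        rw [Nat.card_congr E2, Nat.card_eq_fintype_card, Fintype.card_sigma]
        simp [Nat.card_eq_fintype_card]
      have h3 : ∀ a : Fin n → ZMod (p^e),
          Nat.card {t : ZMod (p^e) // P (a + t • b')} ≤ d * p^(e-s) :=
        fun a => per_a n d Q hhom b p e v s hp hse hnd hhyp a
      calc Nat.card {x : Fin n → ZMod (p^e) // P x} * p^e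
          = ∑ a : Fin n → ZMod (p^e), Nat.card {t : ZMod (p^e) // P (a + t • b')} := by
            rw [← h1, h2]
      _ ≤ ∑ _a : Fin n → ZMod (p^e), d * p^(e-s) := Finset.sum_le_sum (fun a _ => h3 a)
      _ = p^(e*n) * (d * p^(e-s)) := by
            rw [Finset.sum_const, Finset.card_univ, smul_eq_mul, ← Nat.card_eq_fintype_card,
              hcard_tot]
    -- final real chain
    rw [div_le_iff₀ (by positivity)]
    have hc : ((Nat.card {x : Fin n → ZMod (p^e) // P x} : ℕ) : ℝ) * (p:ℝ)^e
        ≤ (p:ℝ)^(e*n) * ((d:ℝ) * (p:ℝ)^(e-s)) := by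
      exact_mod_cast hcount
    have hxp : ((e-s : ℕ):ℝ) = (e:ℝ) - s := by
      push_cast [Nat.cast_sub hse]
      ring
    have hkey : (p:ℝ)^(e-s:ℕ) ≤ (N.natAbs:ℝ) * (p:ℝ)^(-(e:ℝ)/d) * (p:ℝ)^e := by
      calc (p:ℝ)^(e-s:ℕ) = (p:ℝ)^(((e-s:ℕ)):ℝ) := (Real.rpow_natCast _ _).symm
      _ ≤ (p:ℝ)^((v:ℝ) + (-(e:ℝ)/d) + (e:ℝ)) := by
          apply Real.rpow_le_rpow_of_exponent_le hp1R.le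
          rw [hxp]
          have h6 : (e:ℝ) ≤ (d:ℝ)*(s:ℝ) + (d:ℝ)*(v:ℝ) := by exact_mod_cast he_le
          have h7 : (e:ℝ)/d ≤ (v:ℝ) + (s:ℝ) := by
            rw [div_le_iff₀ hd0R]
            nlinarith
          rw [neg_div]
          linarith
      _ = (p:ℝ)^(v:ℝ) * (p:ℝ)^(-(e:ℝ)/d) * (p:ℝ)^(e:ℝ) := by
          rw [Real.rpow_add hp0R, Real.rpow_add hp0R]
      _ ≤ (N.natAbs:ℝ) * (p:ℝ)^(-(e:ℝ)/d) * (p:ℝ)^(e:ℝ) := by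
          have h8 : (p:ℝ)^(v:ℝ) ≤ (N.natAbs:ℝ) := by
            rw [Real.rpow_natCast]; exact hpv_le
          have h9 : (0:ℝ) ≤ (p:ℝ)^(-(e:ℝ)/d) := Real.rpow_nonneg hp0R.le _
          have h10 : (0:ℝ) ≤ (p:ℝ)^(e:ℝ) := Real.rpow_nonneg hp0R.le _
          exact mul_le_mul_of_nonneg_right (mul_le_mul_of_nonneg_right h8 h9) h10
      _ = (N.natAbs:ℝ) * (p:ℝ)^(-(e:ℝ)/d) * (p:ℝ)^e := by
          rw [← Real.rpow_natCast (p:ℝ) e]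
    refine le_of_mul_le_mul_right ?_ (show (0:ℝ) < (p:ℝ)^e from by positivity)
    calc ((Nat.card {x : Fin n → ZMod (p^e) // P x} : ℕ) : ℝ) * (p:ℝ)^e
        ≤ (p:ℝ)^(e*n) * ((d:ℝ) * (p:ℝ)^(e-s)) := hc
    _ ≤ (p:ℝ)^(e*n) * ((d:ℝ) * ((N.natAbs:ℝ) * (p:ℝ)^(-(e:ℝ)/d) * (p:ℝ)^e)) := by
        have hd0 : (0:ℝ) ≤ (d:ℝ) := by positivity
        have hpen : (0:ℝ) ≤ (p:ℝ)^(e*n) := by positivity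
        gcongr
    _ = (d:ℝ) * (N.natAbs:ℝ) * (p:ℝ)^(-(e:ℝ)/d) * (p:ℝ)^(e*n) * (p:ℝ)^e := by ring
end
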